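/- Let p1, p2, p3 ∈ (0,1), q_i = 1 - p_i, and let ρ0 ∈ (0, min(1/(p1*q2), 1/sqrt(p3))) be a real root of R(z) = (1 - p1*q2*z)^2*(1 - p3*z^2) - 4*p2*q1*q2*q3*z^3. Then ρ0 is the unique complex root of R on the circle {z : |z| = ρ0}. -/

import Mathlib

open Complex in
/-- `ρ0` is the unique complex root of `R` on the circle `|z| = ρ0`. -/
theorem unique_root_on_circle
    (p1 p2 p3 q1 q2 q3 ρ0 : ℝ)
    (hp1 : p1 ∈ Set.Ioo (0:ℝ) 1) (hp2 : p2 ∈ Set.Ioo (0:ℝ) 1) (hp3 : p3 ∈ Set.Ioo (0:ℝ) 1)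
    (hq1 : q1 = 1 - p1) (hq2 : q2 = 1 - p2) (hq3 : q3 = 1 - p3)
    (hρpos : 0 < ρ0) (hρ1 : ρ0 < 1/(p1*q2)) (hρ2 : ρ0 < 1 / Real.sqrt p3)
    (hroot : (1 - p1*q2*ρ0)^2 * (1 - p3*ρ0^2) - 4*p2*q1*q2*q3*ρ0^3 = 0) :
    ∀ w : ℂ, ‖w‖ = ρ0 →
      (1 - (p1:ℂ)*(q2:ℂ)*w)^2 * (1 - (p3:ℂ)*w^2) - 4*(p2:ℂ)*(q1:ℂ)*(q2:ℂ)*(q3:ℂ)*w^3 = 0 →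
      w = (ρ0 : ℂ) := by
  obtain ⟨hp1', hp1''⟩ := hp1
  obtain ⟨hp2', hp2''⟩ := hp2
  obtain ⟨hp3', hp3''⟩ := hp3
  have hq1' : 0 < q1 := by simp [hq1]; linarith
  have hq2' : 0 < q2 := by simp [hq2]; linarith
  have hq3' : 0 < q3 := by simp [hq3]; linarith
  set a := p1 * q2 with ha
  have ha' : 0 < a := mul_pos hp1' hq2'
  have haρ : a * ρ0 < 1 := by
    rw [one_div] at hρ1
    calc a * ρ0 < a * a⁻¹ := mul_lt_mul_of_pos_left hρ1 ha'
    _ = 1 := mul_inv_cancel₀ (ne_of_gt ha')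
  have hsq : Real.sqrt p3 ^ 2 = p3 := Real.sq_sqrt hp3'.le
  have hsp : 0 < Real.sqrt p3 := Real.sqrt_pos.mpr hp3'
  have hp3ρ : p3 * ρ0 ^ 2 < 1 := by
    have h1 : ρ0 * Real.sqrt p3 < 1 := by
      rw [one_div] at hρ2
      calc ρ0 * Real.sqrt p3 < (Real.sqrt p3)⁻¹ * Real.sqrt p3 :=
        mul_lt_mul_of_pos_right hρ2 hsp
      _ = 1 := inv_mul_cancel₀ (ne_of_gt hsp)
    have h2 : p3 * ρ0 ^ 2 = (ρ0 * Real.sqrt p3) ^ 2 := by rw [mul_pow, hsq]; ring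
    rw [h2]
    nlinarith [mul_pos hρpos hsp]
  have hc : 0 < 1 - a * ρ0 := by linarith
  have hd : 0 < 1 - p3 * ρ0 ^ 2 := by linarith
  intro w hw hR
  have hRw : (1 - (a:ℂ)*w)^2 * (1 - (p3:ℂ)*w^2) = 4*(p2:ℂ)*(q1:ℂ)*(q2:ℂ)*(q3:ℂ)*w^3 := by
    push_cast [ha]
    linear_combination hR
  have habs : ‖1 - (a:ℂ)*w‖ ^ 2 * ‖1 - (p3:ℂ)*w^2‖
      = 4*p2*q1*q2*q3*ρ0^3 := by
    have := congrArg (‖·‖) hRw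
    simpa [norm_mul, norm_pow, hw, Complex.norm_real, Real.norm_eq_abs, abs_of_pos hp2',
      abs_of_pos hq1', abs_of_pos hq2', abs_of_pos hq3'] using this
  set A := ‖1 - (a:ℂ)*w‖ with hA
  set B := ‖1 - (p3:ℂ)*w^2‖ with hB
  have hprod : A^2 * B = (1 - a*ρ0)^2 * (1 - p3*ρ0^2) := by
    rw [habs]; linarith [hroot]
  have hAge : 1 - a*ρ0 ≤ A := by
    have := norm_sub_norm_le (1 : ℂ) ((a:ℂ)*w)
    simpa [hA, norm_mul, Complex.norm_real, Real.norm_eq_abs, hw,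
      abs_of_pos ha'] using this
  have hBge : 1 - p3*ρ0^2 ≤ B := by
    have := norm_sub_norm_le (1 : ℂ) ((p3:ℂ)*w^2)
    simpa [hB, norm_mul, norm_pow, Complex.norm_real, Real.norm_eq_abs, hw,
      abs_of_pos hp3'] using this
  have h3 : A^2 * (1 - p3*ρ0^2) ≤ (1 - a*ρ0)^2 * (1 - p3*ρ0^2) := by
    calc A^2 * (1 - p3*ρ0^2) ≤ A^2 * B := mul_le_mul_of_nonneg_left hBge (sq_nonneg A)
    _ = _ := hprod
  have hA2 : A^2 ≤ (1 - a*ρ0)^2 := le_of_mul_le_mul_right h3 hd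
  have hAeq : A = 1 - a*ρ0 := by nlinarith [hAge, hA2, hc]
  have hnormsq : Complex.normSq (1 - (a:ℂ)*w) = (1 - a*ρ0)^2 := by
    rw [← Complex.sq_norm, ← hA, hAeq]
  have hwsq : w.re^2 + w.im^2 = ρ0^2 := by
    have := Complex.sq_norm w
    rw [hw] at this
    simpa [Complex.normSq_apply, sq] using this.symm
  simp only [Complex.normSq_apply, Complex.sub_re, Complex.sub_im, Complex.mul_re,
    Complex.mul_im, Complex.ofReal_re, Complex.ofReal_im, Complex.one_re,
    Complex.one_im] at hnormsq
  have key : a * w.re = a * ρ0 := by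
    linear_combination (-(1:ℝ)/2) * hnormsq + (a^2/2) * hwsq
  have hre' : w.re = ρ0 := mul_left_cancel₀ ha'.ne' key
  have him2 : w.im ^ 2 = 0 := by linear_combination hwsq - (w.re + ρ0) * hre'
  have him : w.im = 0 := pow_eq_zero_iff two_ne_zero |>.mp him2
  exact Complex.ext (by simp [hre']) (by simp [him])
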